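/- Let 1 < p < 2 and let a, b be vectors in R^n (not both zero). Define g = |a − b|^2 / (|a| + |b|)^{2−p}. Then |a − b| ≤ 2 (g^{1/p} + g^{1/2} |a|^{(2−p)/2}). -/

import Mathlib

open Real

theorem stmt0 {n : ℕ} (p : ℝ) (hp1 : 1 < p) (hp2 : p < 2)
    (a b : EuclideanSpace ℝ (Fin n)) (hab : ¬(a = 0 ∧ b = 0))
    (g : ℝ) (hg : g = ‖a - b‖ ^ (2 : ℕ) / (‖a‖ + ‖b‖) ^ (2 - p)) :
    ‖a - b‖ ≤ 2 * (g ^ (1 / p) + g ^ (1 / 2 : ℝ) * ‖a‖ ^ ((2 - p) / 2)) := by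
  set d := ‖a - b‖ with hdd
  set s := ‖a‖ + ‖b‖ with hss
  have hd0 : 0 ≤ d := norm_nonneg _
  have hs0 : 0 < s := by
    rcases not_and_or.mp hab with h | h
    · exact add_pos_of_pos_of_nonneg (norm_pos_iff.mpr h) (norm_nonneg _)
    · exact add_pos_of_nonneg_of_pos (norm_nonneg _) (norm_pos_iff.mpr h)
  have hds : d ≤ s := norm_sub_le a b
  have hp0 : 0 < p := by linarith
  have key : ∀ r : ℝ, g ^ r = d ^ (2 * r) / s ^ ((2 - p) * r) := by
    intro r
    rw [hg, Real.div_rpow (by positivity) (Real.rpow_nonneg hs0.le _),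
      ← Real.rpow_natCast d 2, ← Real.rpow_mul hd0, ← Real.rpow_mul hs0.le]
    norm_num
  have hg0 : 0 ≤ g := by
    rw [hg]
    exact div_nonneg (by positivity) (Real.rpow_nonneg hs0.le _)
  rcases le_or_gt s (4 * ‖a‖) with h4 | h4
  · -- second term dominates
    have h1 : d / 2 ≤ g ^ (1 / 2 : ℝ) * ‖a‖ ^ ((2 - p) / 2) := by
      rw [key (1 / 2)]
      have e1 : 2 * (1 / 2 : ℝ) = 1 := by norm_num
      have e2 : (2 - p) * (1 / 2 : ℝ) = (2 - p) / 2 := by ring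
      rw [e1, e2, Real.rpow_one]
      set e := (2 - p) / 2 with he
      have he0 : 0 ≤ e := by rw [he]; linarith
      have hse : s ^ e ≤ 2 * ‖a‖ ^ e := by
        calc s ^ e ≤ (4 * ‖a‖) ^ e := Real.rpow_le_rpow hs0.le h4 he0
          _ = 4 ^ e * ‖a‖ ^ e := Real.mul_rpow (by norm_num) (norm_nonneg _)
          _ ≤ 4 ^ (1 / 2 : ℝ) * ‖a‖ ^ e :=
              mul_le_mul_of_nonneg_right
                (Real.rpow_le_rpow_of_exponent_le (by norm_num) (by rw [he]; linarith))
                (Real.rpow_nonneg (norm_nonneg _) _)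
          _ = 2 * ‖a‖ ^ e := by
              norm_num
      have hspos : (0 : ℝ) < s ^ e := Real.rpow_pos_of_pos hs0 _
      rw [div_mul_eq_mul_div, div_le_div_iff₀ (by norm_num) hspos]
      nlinarith [Real.rpow_nonneg (norm_nonneg a) e]
    have h2 : 0 ≤ g ^ (1 / p) := Real.rpow_nonneg hg0 _
    linarith
  · -- first term dominates
    have hba : ‖b‖ - ‖a‖ ≤ d := by
      rw [hdd, norm_sub_rev]
      exact (norm_sub_norm_le _ _).trans (le_of_eq rfl)
    have hd2 : s < 2 * d := by linarith
    have hdpos : 0 < d := by linarith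
    have h1 : d / 2 ≤ g ^ (1 / p) := by
      rw [key (1 / p)]
      set q := (2 - p) * (1 / p) with hq
      have hq0 : 0 ≤ q := by
        rw [hq]
        have : 0 ≤ 2 - p := by linarith
        positivity
      have hq1 : q ≤ 1 := by
        rw [hq, mul_one_div, div_le_one hp0]; linarith
      have h2q : (2 : ℝ) ^ q ≤ 2 := by
        calc (2 : ℝ) ^ q ≤ (2 : ℝ) ^ (1 : ℝ) :=
              Real.rpow_le_rpow_of_exponent_le (by norm_num) hq1
          _ = 2 := Real.rpow_one 2
      have hsq : s ^ q ≤ 2 * d ^ q := by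
        calc s ^ q ≤ (2 * d) ^ q := Real.rpow_le_rpow hs0.le hd2.le hq0
          _ = 2 ^ q * d ^ q := Real.mul_rpow (by norm_num) hd0
          _ ≤ 2 * d ^ q :=
              mul_le_mul_of_nonneg_right h2q (Real.rpow_nonneg hd0 _)
      have hdq : d ^ (2 * (1 / p)) = d ^ q * d := by
        rw [show 2 * (1 / p) = q + 1 by rw [hq]; field_simp; ring,
          Real.rpow_add hdpos, Real.rpow_one]
      have hspos : (0 : ℝ) < s ^ q := Real.rpow_pos_of_pos hs0 _
      rw [hdq, div_le_div_iff₀ (by norm_num) hspos]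
      nlinarith [Real.rpow_nonneg hd0 q]
    have h2 : 0 ≤ g ^ (1 / 2 : ℝ) * ‖a‖ ^ ((2 - p) / 2) :=
      mul_nonneg (Real.rpow_nonneg hg0 _) (Real.rpow_nonneg (norm_nonneg _) _)
    linarith
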